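/- Let p be an odd prime, f an odd positive integer, n a positive integer, and a an integer with a ≡ 1 (mod 4). Let ℓ be a prime dividing f. Then C_p^{(ℓ)}(a,f,n) = C_p^{(ℓ)}(1,f,1), and this common value equals 1 + ((p(p−1)²)/ℓ) if ℓ ≠ p, and equals 0 if ℓ = p, where (·/ℓ) denotes the Legendre symbol. -/

import Mathlib

open scoped Classical

noncomputable section

/-- `D(m,n) := (m+1-n)^2 - 4m`. -/
def Dfun (m n : ℤ) : ℤ := (m + 1 - n) ^ 2 - 4 * m

/-- `C_p^{(ℓ)}(a,f,n)`: the number of units `m` modulo `ℓ^e`, where `e = ν_ℓ(4nf²)`,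
satisfying `D(p,m) ≡ a f² (mod ℓ^e)`. -/
def Cpl (p : ℕ) (a : ℤ) (f n ℓ : ℕ) : ℕ :=
  ((Finset.range (ℓ ^ ((4 * n * f ^ 2).factorization ℓ))).filter
    (fun m => Nat.Coprime m (ℓ ^ ((4 * n * f ^ 2).factorization ℓ)) ∧
      ((ℓ : ℤ) ^ ((4 * n * f ^ 2).factorization ℓ)) ∣
        (Dfun (p : ℤ) (m : ℤ) - a * (f : ℤ) ^ 2))).card

lemma sq_lift (ℓ : ℕ) (hℓ : ℓ.Prime) (hℓ2 : ℓ ≠ 2) (c : ℤ) (hc : ¬ (ℓ:ℤ) ∣ c)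
    (e : ℕ) (x : ℤ) (hx : (ℓ:ℤ) ∣ x^2 - c) :
    ∃ y : ℤ, (ℓ:ℤ) ∣ y - x ∧ (ℓ:ℤ)^e ∣ y^2 - c := by
  haveI : Fact ℓ.Prime := ⟨hℓ⟩
  suffices h : ∀ e : ℕ, ∃ y : ℤ, (ℓ:ℤ) ∣ y - x ∧ (ℓ:ℤ)^(e+1) ∣ y^2 - c by
    obtain ⟨y, h1, h2⟩ := h e
    exact ⟨y, h1, dvd_trans (pow_dvd_pow _ (Nat.le_succ e)) h2⟩
  intro e
  induction e with
  | zero => exact ⟨x, by simp, by simpa using hx⟩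
  | succ e ih =>
    obtain ⟨y, h1, h2⟩ := ih
    have hdvd1 : (ℓ:ℤ) ∣ y^2 - c :=
      dvd_trans (by simpa using pow_dvd_pow (ℓ:ℤ) (by omega : 1 ≤ e+1)) h2
    have hy : ¬ (ℓ:ℤ) ∣ y := by
      intro hdy
      exact hc (by simpa using dvd_sub (dvd_pow hdy two_ne_zero) hdvd1)
    have h2y : ((2*y : ℤ) : ZMod ℓ) ≠ 0 := by
      intro h0
      rw [ZMod.intCast_zmod_eq_zero_iff_dvd] at h0
      rcases ((Nat.prime_iff_prime_int.mp hℓ).dvd_mul.mp h0) with h | h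
      · have h2 : ℓ ∣ 2 := by exact_mod_cast h
        exact hℓ2 ((Nat.prime_dvd_prime_iff_eq hℓ Nat.prime_two).mp h2)
      · exact hy h
    set B : ℤ := ((((2*y : ℤ) : ZMod ℓ))⁻¹.val : ℤ) with hB
    have hBv : (B : ZMod ℓ) = (((2*y : ℤ) : ZMod ℓ))⁻¹ := by
      rw [hB, Int.cast_natCast, ZMod.natCast_zmod_val]
    have hs0 : ((2*y*B - 1 : ℤ) : ZMod ℓ) = 0 := by
      push_cast [hBv]
      rw [mul_inv_cancel₀ (by push_cast at h2y ⊢; exact h2y)]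
      ring
    rw [ZMod.intCast_zmod_eq_zero_iff_dvd] at hs0
    obtain ⟨s, hs⟩ := hs0
    obtain ⟨k, hk⟩ := h2
    set A : ℤ := (ℓ:ℤ)^e with hA
    have hk' : y^2 - c = A*(ℓ:ℤ)*k := by rw [hk, hA, pow_succ]
    refine ⟨y + (-(k*B)) * (ℓ:ℤ)^(e+1), ?_, ?_⟩
    · have heq : y + (-(k*B)) * (ℓ:ℤ)^(e+1) - x = (y - x) + (-(k*B)) * (ℓ:ℤ)^(e+1) := by ring
      rw [heq]
      exact dvd_add h1 (Dvd.dvd.mul_left (dvd_pow_self (ℓ:ℤ) (Nat.succ_ne_zero e)) _)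
    · refine ⟨k^2*B^2*A - k*s, ?_⟩
      have hA2 : (ℓ:ℤ)^(e+1+1) = A*(ℓ:ℤ)^2 := by rw [hA]; ring
      have hA1 : (ℓ:ℤ)^(e+1) = A*(ℓ:ℤ) := by rw [hA, pow_succ]
      rw [hA2, hA1]
      linear_combination hk' - A*(ℓ:ℤ)*k*hs

lemma isUnit_of_cast_ne (ℓ : ℕ) (hℓ : ℓ.Prime) (e : ℕ) (he : e ≠ 0) (u : ZMod (ℓ^e))
    (h : (ZMod.castHom (dvd_pow_self ℓ he) (ZMod ℓ) u) ≠ 0) : IsUnit u := by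
  haveI : Fact ℓ.Prime := ⟨hℓ⟩
  haveI : NeZero (ℓ^e) := ⟨pow_ne_zero e hℓ.ne_zero⟩
  have h1 : ¬ ℓ ∣ u.val := by
    intro hd
    apply h
    rw [ZMod.castHom_apply, ← ZMod.natCast_val]
    exact (ZMod.natCast_eq_zero_iff _ _).mpr hd
  have h2 : Nat.Coprime u.val (ℓ^e) :=
    Nat.Coprime.pow_right e ((Nat.coprime_comm).mp (hℓ.coprime_iff_not_dvd.mpr h1))
  have := (ZMod.isUnit_iff_coprime u.val (ℓ^e)).mpr h2
  rwa [ZMod.natCast_zmod_val] at this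

lemma card_sol (ℓ : ℕ) (e : ℕ) [NeZero ℓ] [NeZero (ℓ^e)] (hℓ : ℓ.Prime) (hℓ2 : ℓ ≠ 2)
    (he : e ≠ 0) (P c : ℤ) (hc : ¬ (ℓ:ℤ) ∣ c) :
    (Finset.univ.filter (fun m : ZMod (ℓ^e) =>
        IsUnit m ∧ ((P : ZMod (ℓ^e)) - m)^2 = (c : ZMod (ℓ^e)))).card
    = (Finset.univ.filter (fun m : ZMod ℓ =>
        IsUnit m ∧ ((P : ZMod ℓ) - m)^2 = (c : ZMod ℓ))).card := by
  haveI : Fact ℓ.Prime := ⟨hℓ⟩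
  set π := ZMod.castHom (dvd_pow_self ℓ he) (ZMod ℓ) with hπ
  apply Finset.card_bij (fun m _ => π m)
  · intro m hm
    rw [Finset.mem_filter] at hm ⊢
    obtain ⟨-, hu, hsq⟩ := hm
    refine ⟨Finset.mem_univ _, hu.map π, ?_⟩
    have := congrArg π hsq
    simpa [map_pow, map_sub, map_intCast] using this
  · intro m₁ hm₁ m₂ hm₂ hmeq
    rw [Finset.mem_filter] at hm₁ hm₂
    obtain ⟨-, hu₁, hsq₁⟩ := hm₁
    obtain ⟨-, hu₂, hsq₂⟩ := hm₂
    set x₁ : ZMod (ℓ^e) := (P : ZMod (ℓ^e)) - m₁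
    set x₂ : ZMod (ℓ^e) := (P : ZMod (ℓ^e)) - m₂
    have hπx : π x₁ = π x₂ := by
      simp only [x₁, x₂, map_sub, map_intCast, hmeq]
    have hx1ne : π x₁ ≠ 0 := by
      intro h0
      have : (c : ZMod ℓ) = 0 := by
        have := congrArg π hsq₁
        rw [map_pow, map_intCast] at this
        rw [← this, h0]
        ring
      exact hc ((ZMod.intCast_zmod_eq_zero_iff_dvd _ _).mp this)
    have hsum : IsUnit (x₁ + x₂) := by
      apply isUnit_of_cast_ne ℓ hℓ e he
      rw [map_add, ← hπx, ← two_mul]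
      intro h0
      rcases mul_eq_zero.mp h0 with h | h
      · have : ((2:ℤ) : ZMod ℓ) = 0 := by exact_mod_cast h
        rw [ZMod.intCast_zmod_eq_zero_iff_dvd] at this
        have h2 : ℓ ∣ 2 := by exact_mod_cast this
        exact hℓ2 ((Nat.prime_dvd_prime_iff_eq hℓ Nat.prime_two).mp h2)
      · exact hx1ne h
    have hxx : x₁ = x₂ := by
      have hzero : (x₁ - x₂) * (x₁ + x₂) = 0 := by
        have : x₁^2 = x₂^2 := hsq₁.trans hsq₂.symm
        ring_nf
        linear_combination this
      exact sub_eq_zero.mp (hsum.mul_left_eq_zero.mp hzero)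
    exact sub_right_injective hxx
  · intro m₀ hm₀
    rw [Finset.mem_filter] at hm₀
    obtain ⟨-, hu₀, hsq₀⟩ := hm₀
    set X₀ : ℤ := P - (m₀.val : ℤ) with hX₀
    have hX₀cast : ((X₀ : ℤ) : ZMod ℓ) = (P : ZMod ℓ) - m₀ := by
      rw [hX₀]
      push_cast
      rw [ZMod.natCast_val, ZMod.cast_id]
    have hdvd : (ℓ:ℤ) ∣ X₀^2 - c := by
      rw [← ZMod.intCast_zmod_eq_zero_iff_dvd]
      have h9 : ((X₀^2 - c : ℤ) : ZMod ℓ) = ((X₀:ℤ):ZMod ℓ)^2 - (c : ZMod ℓ) := by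
        push_cast; ring
      rw [h9, hX₀cast, hsq₀, sub_self]
    obtain ⟨y, hy1, hy2⟩ := sq_lift ℓ hℓ hℓ2 c hc e X₀ hdvd
    refine ⟨((P - y : ℤ) : ZMod (ℓ^e)), Finset.mem_filter.mpr ⟨Finset.mem_univ _, ?_, ?_⟩, ?_⟩
    · apply isUnit_of_cast_ne ℓ hℓ e he
      have hπm : π (((P - y : ℤ) : ZMod (ℓ^e))) = m₀ := by
        rw [map_intCast]
        have hyx : ((y : ZMod ℓ)) = ((X₀ : ℤ) : ZMod ℓ) := by
          rw [← sub_eq_zero, ← Int.cast_sub, ZMod.intCast_zmod_eq_zero_iff_dvd]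
          exact hy1
        push_cast
        rw [hyx, hX₀cast]
        ring
      rw [hπm]
      exact hu₀.ne_zero
    · have heq2 : (((P:ℤ) : ZMod (ℓ^e)) - ((P - y : ℤ) : ZMod (ℓ^e))) = ((y:ℤ) : ZMod (ℓ^e)) := by
        push_cast; ring
      rw [heq2, ← sub_eq_zero]
      have hz : ((y^2 - c : ℤ) : ZMod (ℓ^e)) = 0 := by
        rw [ZMod.intCast_zmod_eq_zero_iff_dvd]
        exact_mod_cast hy2
      push_cast at hz
      exact_mod_cast hz
    · rw [map_intCast]
      have hyx : ((y : ZMod ℓ)) = ((X₀ : ℤ) : ZMod ℓ) := by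
        rw [← sub_eq_zero, ← Int.cast_sub, ZMod.intCast_zmod_eq_zero_iff_dvd]
        exact hy1
      push_cast
      rw [hyx, hX₀cast]
      ring

lemma card_mod_ell (ℓ p : ℕ) [NeZero ℓ] (hℓ : ℓ.Prime) (hℓ2 : ℓ ≠ 2) (hp : p.Prime)
    (hne : ℓ ≠ p) (c : ℤ) (hcc : (c : ZMod ℓ) = 4 * (p : ZMod ℓ)) :
    ((Finset.univ.filter (fun m : ZMod ℓ =>
        IsUnit m ∧ ((((p:ℤ)+1 : ℤ) : ZMod ℓ) - m)^2 = (c : ZMod ℓ))).card : ℤ)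
    = 1 + jacobiSym ((p : ℤ) * ((p : ℤ) - 1) ^ 2) ℓ := by
  haveI : Fact ℓ.Prime := ⟨hℓ⟩
  have h4 : ((4:ℤ) : ZMod ℓ) ≠ 0 := by
    rw [Ne, ZMod.intCast_zmod_eq_zero_iff_dvd]
    intro h
    have h2 : ℓ ∣ 4 := by exact_mod_cast h
    rw [(by norm_num : (4:ℕ) = 2^2)] at h2
    have h3 : ℓ ∣ 2 := hℓ.dvd_of_dvd_pow h2
    exact hℓ2 ((Nat.prime_dvd_prime_iff_eq hℓ Nat.prime_two).mp h3)
  have h2ne : ((2: ZMod ℓ)) ≠ 0 := by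
    intro h; apply h4; push_cast; rw [show (4 : ZMod ℓ) = 2*2 by norm_num, h]; ring
  have hpne : ((p : ZMod ℓ)) ≠ 0 := by
    rw [Ne, ZMod.natCast_eq_zero_iff]
    intro h
    exact hne ((Nat.prime_dvd_prime_iff_eq hℓ hp).mp h)
  by_cases hp1 : (p : ZMod ℓ) = 1
  · have hfil : (Finset.univ.filter (fun m : ZMod ℓ =>
        IsUnit m ∧ ((((p:ℤ)+1 : ℤ) : ZMod ℓ) - m)^2 = (c : ZMod ℓ))) = {4} := by
      ext m
      simp only [Finset.mem_filter, Finset.mem_univ, true_and, Finset.mem_singleton]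
      rw [hcc]
      have hcast : ((((p:ℤ)+1 : ℤ) : ZMod ℓ)) = 2 := by push_cast; rw [hp1]; norm_num
      rw [hcast, hp1]
      constructor
      · rintro ⟨hu, hsq⟩
        have : m * (m - 4) = 0 := by linear_combination hsq
        rcases mul_eq_zero.mp this with h | h
        · exact absurd h hu.ne_zero
        · exact sub_eq_zero.mp h
      · rintro rfl
        constructor
        · apply isUnit_iff_ne_zero.mpr
          intro h0
          apply h4; push_cast; exact h0
        · ring
    rw [hfil, Finset.card_singleton]
    have hj : jacobiSym ((p : ℤ) * ((p : ℤ) - 1) ^ 2) ℓ = 0 := by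
      rw [← jacobiSym.legendreSym.to_jacobiSym]
      rw [legendreSym.eq_zero_iff]
      push_cast
      rw [hp1]
      ring
    rw [hj]; norm_num
  · have hfil : (Finset.univ.filter (fun m : ZMod ℓ =>
        IsUnit m ∧ ((((p:ℤ)+1 : ℤ) : ZMod ℓ) - m)^2 = (c : ZMod ℓ)))
        = (Finset.univ.filter (fun m : ZMod ℓ =>
          ((((p:ℤ)+1 : ℤ) : ZMod ℓ) - m)^2 = (c : ZMod ℓ))) := by
      apply Finset.filter_congr
      intro m _
      simp only [and_iff_right_iff_imp]
      intro hsq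
      apply isUnit_iff_ne_zero.mpr
      rintro rfl
      rw [hcc, sub_zero] at hsq
      apply hp1
      have hsq' : ((p : ZMod ℓ) - 1)^2 = 0 := by push_cast at hsq; linear_combination hsq
      have h0 := pow_eq_zero_iff (n := 2) (by norm_num) |>.mp hsq'
      exact sub_eq_zero.mp h0
    rw [hfil]
    have hbij : (Finset.univ.filter (fun m : ZMod ℓ =>
          ((((p:ℤ)+1 : ℤ) : ZMod ℓ) - m)^2 = (c : ZMod ℓ))).card
        = (Finset.univ.filter (fun x : ZMod ℓ => x^2 = (c : ZMod ℓ))).card := by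
      apply Finset.card_bij (fun m _ => (((p:ℤ)+1 : ℤ) : ZMod ℓ) - m)
      · intro m hm
        rw [Finset.mem_filter] at hm ⊢
        exact ⟨Finset.mem_univ _, hm.2⟩
      · intro m₁ _ m₂ _ h
        exact sub_right_injective h
      · intro x hx
        rw [Finset.mem_filter] at hx
        refine ⟨(((p:ℤ)+1 : ℤ) : ZMod ℓ) - x,
          Finset.mem_filter.mpr ⟨Finset.mem_univ _, ?_⟩, by ring⟩
        rw [sub_sub_cancel]
        exact hx.2
    rw [hbij]
    have hcount : ((Finset.univ.filter (fun x : ZMod ℓ => x^2 = (c : ZMod ℓ))).card : ℤ)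
        = legendreSym ℓ c + 1 := by
      have := legendreSym.card_sqrts (p := ℓ) hℓ2 c
      rw [← this]
      congr 1
      rw [Set.toFinset_setOf]
    rw [hcount]
    have hleg : legendreSym ℓ c = jacobiSym ((p : ℤ) * ((p : ℤ) - 1) ^ 2) ℓ := by
      rw [← jacobiSym.legendreSym.to_jacobiSym]
      have hmod : c % (ℓ:ℤ) = (4*(p:ℤ)) % (ℓ:ℤ) := by
        have h5 : (c : ZMod ℓ) = ((4*(p:ℤ) : ℤ) : ZMod ℓ) := by rw [hcc]; push_cast; ring
        exact (ZMod.intCast_eq_intCast_iff _ _ _).mp h5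
      have h1 : legendreSym ℓ c = legendreSym ℓ (4*(p:ℤ)) := by
        rw [legendreSym.mod ℓ c, legendreSym.mod ℓ (4*(p:ℤ)), hmod]
      rw [h1]
      have h2 : legendreSym ℓ (4*(p:ℤ)) = legendreSym ℓ ((p:ℤ)) := by
        rw [(by norm_num : (4*(p:ℤ)) = (2:ℤ)^2 * (p:ℤ)), legendreSym.mul,
          legendreSym.sq_one' (p := ℓ) (a := (2:ℤ)) (by push_cast; exact h2ne), one_mul]
      have h3 : legendreSym ℓ ((p:ℤ) * ((p:ℤ) - 1) ^ 2) = legendreSym ℓ ((p:ℤ)) := by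
        have hx : (((p:ℤ)-1 : ℤ) : ZMod ℓ) ≠ 0 := by
          push_cast
          exact sub_ne_zero.mpr hp1
        rw [legendreSym.mul, legendreSym.sq_one' (p := ℓ) (a := (p:ℤ)-1) hx, mul_one]
      rw [h2, h3]
    rw [hleg]; ring

lemma Cpl_eq (p : ℕ) (a : ℤ) (f n ℓ : ℕ)
    [NeZero (ℓ ^ ((4 * n * f ^ 2).factorization ℓ))] :
    Cpl p a f n ℓ
      = (Finset.univ.filter (fun m : ZMod (ℓ ^ ((4 * n * f ^ 2).factorization ℓ)) =>
          IsUnit m ∧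
            ((((p:ℤ)+1 : ℤ) : ZMod (ℓ ^ ((4 * n * f ^ 2).factorization ℓ))) - m)^2
              = ((4*(p:ℤ) + a*(f:ℤ)^2 : ℤ)
                  : ZMod (ℓ ^ ((4 * n * f ^ 2).factorization ℓ))))).card := by
  set e := (4 * n * f ^ 2).factorization ℓ with he
  set q := ℓ ^ e with hq
  have hqcast : ((q:ℕ):ℤ) = (ℓ:ℤ)^e := by push_cast [hq]; ring
  have hkey : ∀ m : ℕ, ((ℓ : ℤ)^e ∣ (Dfun (p : ℤ) (m : ℤ) - a * (f : ℤ) ^ 2)) ↔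
      ((((p:ℤ)+1 : ℤ) : ZMod q) - ((m:ℕ) : ZMod q))^2
        = ((4*(p:ℤ) + a*(f:ℤ)^2 : ℤ) : ZMod q) := by
    intro m
    rw [← hqcast, ← ZMod.intCast_zmod_eq_zero_iff_dvd]
    have hrw : ((Dfun (p : ℤ) (m : ℤ) - a * (f : ℤ) ^ 2 : ℤ) : ZMod q)
        = ((((p:ℤ)+1 : ℤ) : ZMod q) - ((m:ℕ) : ZMod q))^2
          - ((4*(p:ℤ) + a*(f:ℤ)^2 : ℤ) : ZMod q) := by
      rw [Dfun]; push_cast; ring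
    rw [hrw, sub_eq_zero]
  rw [Cpl]
  apply Finset.card_bij (fun m _ => ((m : ℕ) : ZMod q))
  · intro m hm
    rw [Finset.mem_filter] at hm ⊢
    obtain ⟨-, hcop, hdvd⟩ := hm
    exact ⟨Finset.mem_univ _, (ZMod.isUnit_iff_coprime m q).mpr hcop, (hkey m).mp hdvd⟩
  · intro m₁ hm₁ m₂ hm₂ hmeq
    rw [Finset.mem_filter, Finset.mem_range] at hm₁ hm₂
    have := congrArg ZMod.val hmeq
    rwa [ZMod.val_cast_of_lt hm₁.1, ZMod.val_cast_of_lt hm₂.1] at this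
  · intro x hx
    rw [Finset.mem_filter] at hx
    obtain ⟨-, hu, hsq⟩ := hx
    refine ⟨x.val, Finset.mem_filter.mpr ⟨Finset.mem_range.mpr (ZMod.val_lt x), ?_, ?_⟩,
      ZMod.natCast_zmod_val x⟩
    · have hu' := hu
      rw [← ZMod.natCast_zmod_val x] at hu'
      exact (ZMod.isUnit_iff_coprime _ _).mp hu'
    · apply (hkey x.val).mpr
      rwa [ZMod.natCast_zmod_val x]

lemma Cpl_p_zero (p : ℕ) (hp : p.Prime) (hp2 : p ≠ 2) (a : ℤ) (f n : ℕ)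
    (hdvd : p ∣ f) (hf0 : f ≠ 0) (hn : n ≠ 0) : Cpl p a f n p = 0 := by
  have hne : 4 * n * f ^ 2 ≠ 0 := by positivity
  set e := (4 * n * f ^ 2).factorization p with he
  have he2 : 2 ≤ e := by
    rw [he, ← Nat.Prime.pow_dvd_iff_le_factorization hp hne]
    calc p^2 ∣ f^2 := pow_dvd_pow_of_dvd hdvd 2
    _ ∣ 4 * n * f^2 := dvd_mul_left _ _
  rw [Cpl, Finset.card_eq_zero, Finset.filter_eq_empty_iff]
  rintro M - ⟨hcop, hdvdD⟩
  have hpint : Prime ((p:ℕ):ℤ) := Nat.prime_iff_prime_int.mp hp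
  have h2 : ((p:ℤ))^2 ∣ Dfun (p:ℤ) (M:ℤ) - a * (f:ℤ)^2 :=
    dvd_trans (pow_dvd_pow (p:ℤ) he2) hdvdD
  have haf : ((p:ℤ))^2 ∣ a * (f:ℤ)^2 := by
    have : ((p:ℤ))^2 ∣ (f:ℤ)^2 := pow_dvd_pow_of_dvd (by exact_mod_cast hdvd) 2
    exact Dvd.dvd.mul_left this a
  have h3 : ((p:ℤ))^2 ∣ ((p:ℤ)+1-(M:ℤ))^2 - 4*(p:ℤ) := by
    have := dvd_add h2 haf
    rw [Dfun] at this
    convert this using 1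
    · rfl
    · ring
  have h4 : ((p:ℤ)) ∣ ((p:ℤ)+1-(M:ℤ))^2 - 4*(p:ℤ) :=
    dvd_trans (dvd_pow_self (p:ℤ) two_ne_zero) h3
  have h5 : ((p:ℤ)) ∣ ((p:ℤ)+1-(M:ℤ))^2 := by
    have h44 : (p:ℤ) ∣ 4*(p:ℤ) := Dvd.intro_left 4 rfl
    have := dvd_add h4 h44
    convert this using 1
    · rfl
    · ring
  have h6 : ((p:ℤ)) ∣ ((p:ℤ)+1-(M:ℤ)) := hpint.dvd_of_dvd_pow h5
  have h7 : ((p:ℤ))^2 ∣ ((p:ℤ)+1-(M:ℤ))^2 := pow_dvd_pow_of_dvd h6 2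
  have h8 : ((p:ℤ))^2 ∣ 4*(p:ℤ) := by
    have := dvd_sub h7 h3
    convert this using 1
    · rfl
    · ring
  have h9 : ((p:ℤ)) ∣ 4 := by
    have hp0 : ((p:ℤ)) ≠ 0 := by exact_mod_cast hp.ne_zero
    rw [pow_two] at h8
    have h8' : (p:ℤ) * (p:ℤ) ∣ (p:ℤ) * 4 := by
      convert h8 using 1
      ring
    exact (mul_dvd_mul_iff_left hp0).mp h8'
  have h10 : p ∣ 4 := by exact_mod_cast h9
  rw [(by norm_num : (4:ℕ) = 2^2)] at h10
  exact hp2 ((Nat.prime_dvd_prime_iff_eq hp Nat.prime_two).mp (hp.dvd_of_dvd_pow h10))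

theorem Cpl_of_dvd_f (p : ℕ) (hp : p.Prime) (hp2 : p ≠ 2)
    (f : ℕ) (hf : Odd f) (hf0 : 0 < f) (n : ℕ) (hn : 0 < n)
    (a : ℤ) (ha : a % 4 = 1)
    (ℓ : ℕ) (hℓ : ℓ.Prime) (hdvd : ℓ ∣ f) :
    Cpl p a f n ℓ = Cpl p 1 f 1 ℓ ∧
    (ℓ ≠ p → (Cpl p 1 f 1 ℓ : ℤ) = 1 + jacobiSym ((p : ℤ) * ((p : ℤ) - 1) ^ 2) ℓ) ∧
    (ℓ = p → Cpl p 1 f 1 ℓ = 0) := by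
  haveI : Fact ℓ.Prime := ⟨hℓ⟩
  haveI : NeZero ℓ := ⟨hℓ.ne_zero⟩
  have hℓ2 : ℓ ≠ 2 := by
    rintro rfl
    rw [Nat.odd_iff] at hf
    omega
  by_cases hℓp : ℓ = p
  · subst hℓp
    have hz1 : Cpl ℓ a f n ℓ = 0 :=
      Cpl_p_zero ℓ hp hp2 a f n hdvd hf0.ne' hn.ne'
    have hz2 : Cpl ℓ 1 f 1 ℓ = 0 :=
      Cpl_p_zero ℓ hp hp2 1 f 1 hdvd hf0.ne' one_ne_zero
    exact ⟨hz1.trans hz2.symm, fun h => absurd rfl h, fun _ => hz2⟩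
  · -- ℓ ≠ p
    have hℓnp : ¬ (ℓ:ℤ) ∣ (4:ℤ)*(p:ℤ) := by
      intro h
      rcases ((Nat.prime_iff_prime_int.mp hℓ).dvd_mul.mp h) with h | h
      · have h2 : ℓ ∣ 4 := by exact_mod_cast h
        rw [(by norm_num : (4:ℕ) = 2^2)] at h2
        exact hℓ2 ((Nat.prime_dvd_prime_iff_eq hℓ Nat.prime_two).mp (hℓ.dvd_of_dvd_pow h2))
      · have h2 : ℓ ∣ p := by exact_mod_cast h
        exact hℓp ((Nat.prime_dvd_prime_iff_eq hℓ hp).mp h2)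
    have hℓf : (ℓ:ℤ) ∣ (f:ℤ) := by exact_mod_cast hdvd
    have hcgen : ∀ a' : ℤ, ¬ (ℓ:ℤ) ∣ (4*(p:ℤ) + a'*(f:ℤ)^2) := by
      intro a' h
      apply hℓnp
      have hdf : (ℓ:ℤ) ∣ a'*(f:ℤ)^2 :=
        Dvd.dvd.mul_left (dvd_trans hℓf (dvd_pow_self _ two_ne_zero)) a'
      have := dvd_sub h hdf
      convert this using 1
      · rfl
      · ring
    have hfz : ((f:ℕ) : ZMod ℓ) = 0 := (ZMod.natCast_eq_zero_iff f ℓ).mpr hdvd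
    have hcast : ∀ a' : ℤ, ((4*(p:ℤ) + a'*(f:ℤ)^2 : ℤ) : ZMod ℓ) = 4 * (p : ZMod ℓ) := by
      intro a'
      push_cast [hfz]
      ring
    have hmain : ∀ (a' : ℤ) (n' : ℕ), n' ≠ 0 →
        ((Cpl p a' f n' ℓ : ℕ) : ℤ) = 1 + jacobiSym ((p : ℤ) * ((p : ℤ) - 1) ^ 2) ℓ := by
      intro a' n' hn'
      have hne : 4 * n' * f ^ 2 ≠ 0 := by positivity
      set e := (4 * n' * f ^ 2).factorization ℓ with hee
      have he1 : e ≠ 0 := by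
        have : 0 < e := hℓ.factorization_pos_of_dvd hne
          (dvd_trans hdvd (dvd_trans (dvd_pow_self f two_ne_zero) (dvd_mul_left _ _)))
        omega
      haveI : NeZero (ℓ^e) := ⟨pow_ne_zero e hℓ.ne_zero⟩
      rw [Cpl_eq p a' f n' ℓ]
      rw [card_sol ℓ e hℓ hℓ2 he1 ((p:ℤ)+1) (4*(p:ℤ) + a'*(f:ℤ)^2) (hcgen a')]
      exact card_mod_ell ℓ p hℓ hℓ2 hp hℓp (4*(p:ℤ) + a'*(f:ℤ)^2) (hcast a')
    have h1 := hmain a n hn.ne'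
    have h2 := hmain 1 1 one_ne_zero
    refine ⟨?_, fun _ => h2, fun h => absurd h hℓp⟩
    have := h1.trans h2.symm
    exact_mod_cast this

end
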